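/- If (Z₁*, Z₂*) is bivariate standard normal with correlation r ∈ (-1,1), then max(Z₁*, Z₂*) has the univariate skew normal distribution SN(β) with β = √((1-r)/(1+r)); i.e., its density is 2φ(z)Φ(βz). -/

import Mathlib

open Real MeasureTheory Filter Set

noncomputable def stdNormalPdf (t : ℝ) : ℝ := (Real.sqrt (2 * π))⁻¹ * Real.exp (-t ^ 2 / 2)

noncomputable def stdNormalCdf (z : ℝ) : ℝ := ∫ t in Set.Iic z, stdNormalPdf t

/-- Bivariate standard normal density with correlation r. -/
noncomputable def biNormalPdf (r : ℝ) (p : ℝ × ℝ) : ℝ :=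
  (2 * π * Real.sqrt (1 - r ^ 2))⁻¹ *
    Real.exp (-(p.1 ^ 2 - 2 * r * p.1 * p.2 + p.2 ^ 2) / (2 * (1 - r ^ 2)))

/-- Substitution lemma: integrating a rescaled standard normal density over `Iic t`. -/
lemma aux_sub_lemma {c : ℝ} (hc : 0 < c) (μ t : ℝ) :
    (∫ y in Set.Iic t, c⁻¹ * stdNormalPdf ((y - μ) / c)) = stdNormalCdf ((t - μ) / c) := by
  set G : ℝ → ℝ := (Set.Iic ((t - μ)/c)).indicator stdNormalPdf with hG
  have key : ∀ y : ℝ, (Set.Iic t).indicator (fun y => c⁻¹ * stdNormalPdf ((y - μ) / c)) y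
      = c⁻¹ * G ((y - μ) / c) := by
    intro y
    have hiff : y ≤ t ↔ (y - μ) / c ≤ (t - μ) / c := by
      constructor
      · intro h; gcongr
      · intro h
        have h2 := mul_le_mul_of_nonneg_right h hc.le
        rw [div_mul_cancel₀ _ hc.ne', div_mul_cancel₀ _ hc.ne'] at h2
        linarith
    rw [hG, Set.indicator_apply, Set.indicator_apply]
    simp only [Set.mem_Iic]
    by_cases hy : y ≤ t
    · simp [hy, hiff.mp hy]
    · simp [hy, mt hiff.mpr hy]
  calc (∫ y in Set.Iic t, c⁻¹ * stdNormalPdf ((y - μ) / c))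
      = ∫ y, c⁻¹ * G ((y - μ) / c) := by
        rw [← integral_indicator measurableSet_Iic]; exact integral_congr_ae (.of_forall key)
    _ = c⁻¹ * ∫ y, G ((y - μ) / c) := integral_const_mul _ _
    _ = c⁻¹ * ∫ y, G (y / c) := by
        rw [show (fun y : ℝ => G ((y - μ) / c)) = fun y => (fun u => G (u / c)) (y - μ) from rfl,
          integral_sub_right_eq_self (fun u => G (u / c)) μ]
    _ = c⁻¹ * (|c| • ∫ u, G u) := by rw [MeasureTheory.Measure.integral_comp_div G c]
    _ = ∫ u, G u := by
        rw [abs_of_pos hc, smul_eq_mul, ← mul_assoc, inv_mul_cancel₀ hc.ne', one_mul]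
    _ = stdNormalCdf ((t - μ)/c) := by rw [stdNormalCdf, ← integral_indicator measurableSet_Iic]

/-- Factorization of the bivariate normal density as marginal times conditional. -/
lemma aux_factor_lemma (r : ℝ) (hr : -1 < r) (hr' : r < 1) (x y : ℝ) :
    biNormalPdf r (x, y) =
      stdNormalPdf x * ((Real.sqrt (1 - r ^ 2))⁻¹ *
        stdNormalPdf ((y - r * x) / Real.sqrt (1 - r ^ 2))) := by
  have h2 : (0:ℝ) < 1 - r ^ 2 := by nlinarith
  have hσ : (0:ℝ) < Real.sqrt (1 - r ^ 2) := Real.sqrt_pos.mpr h2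
  have hσ2 : Real.sqrt (1 - r ^ 2) ^ 2 = 1 - r ^ 2 := Real.sq_sqrt h2.le
  have hπ : (0:ℝ) < 2 * π := by positivity
  have hs : Real.sqrt (2 * π) * Real.sqrt (2 * π) = 2 * π := Real.mul_self_sqrt hπ.le
  unfold biNormalPdf stdNormalPdf
  have hexp : -(x ^ 2 - 2 * r * x * y + y ^ 2) / (2 * (1 - r ^ 2))
      = -x ^ 2 / 2 + -((y - r * x) / Real.sqrt (1 - r ^ 2)) ^ 2 / 2 := by
    rw [div_pow, hσ2]
    field_simp
    ring
  have hc : ((2:ℝ) * π * Real.sqrt (1 - r ^ 2))⁻¹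
      = (Real.sqrt (2 * π))⁻¹ * (Real.sqrt (2 * π))⁻¹ * (Real.sqrt (1 - r ^ 2))⁻¹ := by
    rw [← mul_inv, ← mul_inv, hs]
  rw [hexp, Real.exp_add, hc]
  ring

lemma aux_beta_lemma (r : ℝ) (hr : -1 < r) (hr' : r < 1) (x : ℝ) :
    (x - r * x) / Real.sqrt (1 - r ^ 2) = Real.sqrt ((1 - r) / (1 + r)) * x := by
  have h1 : (0:ℝ) < 1 - r := by linarith
  have h2 : (0:ℝ) < 1 + r := by linarith
  have : (1 - r ^ 2) = (1 - r) * (1 + r) := by ring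
  rw [this, Real.sqrt_mul h1.le, Real.sqrt_div h1.le]
  rw [show x - r * x = (1 - r) * x by ring]
  have hs1 : Real.sqrt (1 - r) ≠ 0 := by positivity
  have hs2 : Real.sqrt (1 + r) ≠ 0 := by positivity
  field_simp
  linear_combination (-x) * Real.mul_self_sqrt h1.le

lemma aux_biNormal_integrable (r : ℝ) (hr : -1 < r) (hr' : r < 1) :
    Integrable (biNormalPdf r) := by
  have hrabs : |r| < 1 := abs_lt.mpr ⟨hr, hr'⟩
  have h2 : (0:ℝ) < 1 - r ^ 2 := by nlinarith
  have hσ : (0:ℝ) < Real.sqrt (1 - r ^ 2) := Real.sqrt_pos.mpr h2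
  set a : ℝ := (2 * (1 + |r|))⁻¹ with ha
  have hapos : 0 < a := by positivity
  set C : ℝ := (2 * π * Real.sqrt (1 - r ^ 2))⁻¹ with hC
  have hCpos : 0 < C := by positivity
  have hcont : Continuous (biNormalPdf r) := by
    unfold biNormalPdf; fun_prop
  have hbound : ∀ p : ℝ × ℝ, ‖biNormalPdf r p‖
      ≤ C * (Real.exp (-a * p.1 ^ 2) * Real.exp (-a * p.2 ^ 2)) := by
    rintro ⟨x, y⟩
    have hQ : (1 - |r|) * (x ^ 2 + y ^ 2) ≤ x ^ 2 - 2 * r * x * y + y ^ 2 := by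
      have h1 : r * x * y ≤ |r| * |x| * |y| := by
        calc r * x * y ≤ |r * x * y| := le_abs_self _
        _ = |r| * |x| * |y| := by rw [abs_mul, abs_mul]
      nlinarith [sq_nonneg (|x| - |y|), sq_abs x, sq_abs y, abs_nonneg r, abs_nonneg x,
        abs_nonneg y]
    have hE : -(x ^ 2 - 2 * r * x * y + y ^ 2) / (2 * (1 - r ^ 2))
        ≤ -a * x ^ 2 + -a * y ^ 2 := by
      have heq : -((1 - |r|) * (x ^ 2 + y ^ 2)) / (2 * (1 - r ^ 2))
          = -a * x ^ 2 + -a * y ^ 2 := by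
        have h3 : 1 - r ^ 2 = (1 - |r|) * (1 + |r|) := by rw [← sq_abs]; ring
        rw [h3, ha]
        have h1r : (0:ℝ) < 1 - |r| := by linarith
        have h2r : (0:ℝ) < 1 + |r| := by positivity
        field_simp
        ring
      rw [← heq]
      exact div_le_div_of_nonneg_right (by linarith) (by positivity)
    have hval : biNormalPdf r (x, y)
        = C * Real.exp (-(x ^ 2 - 2 * r * x * y + y ^ 2) / (2 * (1 - r ^ 2))) := rfl
    rw [hval, Real.norm_eq_abs, abs_of_nonneg (by positivity), ← Real.exp_add]
    exact mul_le_mul_of_nonneg_left (Real.exp_le_exp.mpr hE) hCpos.le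
  have hg : Integrable (fun p : ℝ × ℝ =>
      C * (Real.exp (-a * p.1 ^ 2) * Real.exp (-a * p.2 ^ 2))) := by
    rw [MeasureTheory.Measure.volume_eq_prod]
    exact ((integrable_exp_neg_mul_sq hapos).mul_prod (integrable_exp_neg_mul_sq hapos)).const_mul C
  exact hg.mono' hcont.aestronglyMeasurable (Filter.Eventually.of_forall hbound)

lemma aux_region_lemma (f : ℝ × ℝ → ℝ) (hf : Integrable f) (z : ℝ) :
    (∫ p in {p : ℝ × ℝ | p.1 ≤ z ∧ p.2 ≤ p.1}, f p)
      = ∫ x in Set.Iic z, ∫ y in Set.Iic x, f (x, y) := by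
  set A : Set (ℝ × ℝ) := {p : ℝ × ℝ | p.1 ≤ z ∧ p.2 ≤ p.1}
  have hA : MeasurableSet A :=
    (measurableSet_le measurable_fst measurable_const).inter
      (measurableSet_le measurable_snd measurable_fst)
  rw [← integral_indicator hA, MeasureTheory.Measure.volume_eq_prod,
    MeasureTheory.integral_prod _ (hf.indicator hA)]
  rw [show (∫ x in Set.Iic z, ∫ y in Set.Iic x, f (x, y))
      = ∫ x, (Set.Iic z).indicator (fun x => ∫ y in Set.Iic x, f (x, y)) x from
    (integral_indicator measurableSet_Iic).symm]
  congr 1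
  ext x
  by_cases hx : x ≤ z
  · rw [Set.indicator_of_mem (Set.mem_Iic.mpr hx)]
    have h1 : ∀ y : ℝ, A.indicator f (x, y) = (Set.Iic x).indicator (fun y => f (x, y)) y := by
      intro y
      rw [Set.indicator_apply, Set.indicator_apply]
      simp [A, hx]
    rw [integral_congr_ae (Filter.Eventually.of_forall h1), integral_indicator measurableSet_Iic]
  · rw [Set.indicator_of_notMem (by simpa using hx)]
    have h1 : ∀ y : ℝ, A.indicator f (x, y) = 0 := by
      intro y
      rw [Set.indicator_apply, if_neg (by simp [A]; intro h; exact absurd h hx)]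
    rw [integral_congr_ae (Filter.Eventually.of_forall h1), integral_zero]

lemma aux_region_lemma' (f : ℝ × ℝ → ℝ) (hf : Integrable f) (z : ℝ) :
    (∫ p in {p : ℝ × ℝ | p.1 ≤ z ∧ p.2 < p.1}, f p)
      = ∫ x in Set.Iic z, ∫ y in Set.Iio x, f (x, y) := by
  set A : Set (ℝ × ℝ) := {p : ℝ × ℝ | p.1 ≤ z ∧ p.2 < p.1}
  have hA : MeasurableSet A :=
    (measurableSet_le measurable_fst measurable_const).inter
      (measurableSet_lt measurable_snd measurable_fst)
  rw [← integral_indicator hA, MeasureTheory.Measure.volume_eq_prod,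
    MeasureTheory.integral_prod _ (hf.indicator hA)]
  rw [show (∫ x in Set.Iic z, ∫ y in Set.Iio x, f (x, y))
      = ∫ x, (Set.Iic z).indicator (fun x => ∫ y in Set.Iio x, f (x, y)) x from
    (integral_indicator measurableSet_Iic).symm]
  congr 1
  ext x
  by_cases hx : x ≤ z
  · rw [Set.indicator_of_mem (Set.mem_Iic.mpr hx)]
    have h1 : ∀ y : ℝ, A.indicator f (x, y) = (Set.Iio x).indicator (fun y => f (x, y)) y := by
      intro y
      rw [Set.indicator_apply, Set.indicator_apply]
      simp [A, hx]
    rw [integral_congr_ae (Filter.Eventually.of_forall h1), integral_indicator measurableSet_Iio]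
  · rw [Set.indicator_of_notMem (by simpa using hx)]
    have h1 : ∀ y : ℝ, A.indicator f (x, y) = 0 := by
      intro y
      rw [Set.indicator_apply, if_neg (by simp [A]; intro h; exact absurd h hx)]
    rw [integral_congr_ae (Filter.Eventually.of_forall h1), integral_zero]

lemma aux_swap_lemma (r : ℝ) (z : ℝ) :
    (∫ p in {p : ℝ × ℝ | p.2 ≤ z ∧ p.1 < p.2}, biNormalPdf r p)
      = ∫ p in {p : ℝ × ℝ | p.1 ≤ z ∧ p.2 < p.1}, biNormalPdf r p := by
  have hsym : ∀ p : ℝ × ℝ, biNormalPdf r (p.2, p.1) = biNormalPdf r p := by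
    intro p; unfold biNormalPdf; ring_nf
  calc (∫ p in {p : ℝ × ℝ | p.2 ≤ z ∧ p.1 < p.2}, biNormalPdf r p)
      = ∫ p in {p : ℝ × ℝ | p.2 ≤ z ∧ p.1 < p.2}, biNormalPdf r p
          ∂(Measure.map (MeasurableEquiv.prodComm : ℝ × ℝ ≃ᵐ ℝ × ℝ) volume) := by
        rw [MeasureTheory.Measure.volume_eq_prod,
          show ((MeasurableEquiv.prodComm : ℝ × ℝ ≃ᵐ ℝ × ℝ) : ℝ × ℝ → ℝ × ℝ) = Prod.swap from rfl,
          MeasureTheory.Measure.prod_swap]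
    _ = ∫ p in (MeasurableEquiv.prodComm : ℝ × ℝ ≃ᵐ ℝ × ℝ) ⁻¹' {p : ℝ × ℝ | p.2 ≤ z ∧ p.1 < p.2},
          biNormalPdf r ((MeasurableEquiv.prodComm : ℝ × ℝ ≃ᵐ ℝ × ℝ) p) :=
        MeasureTheory.setIntegral_map_equiv _ _ _
    _ = ∫ p in {p : ℝ × ℝ | p.1 ≤ z ∧ p.2 < p.1}, biNormalPdf r p := by
        apply setIntegral_congr_fun
        · exact (measurableSet_le measurable_fst measurable_const).inter
            (measurableSet_lt measurable_snd measurable_fst)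
        · intro p _; exact hsym p

/-- Roberts (1966)/Loperfido (2002): if (Z₁*, Z₂*) is bivariate standard normal with
correlation r ∈ (-1,1), then max(Z₁*, Z₂*) ~ SN(β) with β = √((1-r)/(1+r)):
its cdf equals the skew normal cdf with density 2φ(z)Φ(βz). -/
theorem max_biNormal_is_skewNormal (r : ℝ) (hr : -1 < r) (hr' : r < 1) :
    ∀ z : ℝ,
      (∫ p in {p : ℝ × ℝ | max p.1 p.2 ≤ z}, biNormalPdf r p) =
        ∫ t in Set.Iic z,
          2 * stdNormalPdf t * stdNormalCdf (Real.sqrt ((1 - r) / (1 + r)) * t) := by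
  intro z
  have h2 : (0:ℝ) < 1 - r ^ 2 := by nlinarith
  have hσ : (0:ℝ) < Real.sqrt (1 - r ^ 2) := Real.sqrt_pos.mpr h2
  have hf : Integrable (biNormalPdf r) := aux_biNormal_integrable r hr hr'
  set A : Set (ℝ × ℝ) := {p : ℝ × ℝ | p.1 ≤ z ∧ p.2 ≤ p.1} with hAdef
  set B : Set (ℝ × ℝ) := {p : ℝ × ℝ | p.2 ≤ z ∧ p.1 < p.2} with hBdef
  have hB : MeasurableSet B :=
    (measurableSet_le measurable_snd measurable_const).inter
      (measurableSet_lt measurable_fst measurable_snd)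
  have hunion : {p : ℝ × ℝ | max p.1 p.2 ≤ z} = A ∪ B := by
    ext p
    simp only [Set.mem_setOf_eq, Set.mem_union, max_le_iff, hAdef, hBdef]
    by_cases h : p.2 ≤ p.1
    · constructor
      · rintro ⟨h1, _⟩; exact Or.inl ⟨h1, h⟩
      · rintro (⟨h1, h2⟩ | ⟨h1, h2⟩) <;> constructor <;> linarith
    · push_neg at h
      constructor
      · rintro ⟨_, h2⟩; exact Or.inr ⟨h2, h⟩
      · rintro (⟨h1, h2⟩ | ⟨h1, h2⟩) <;> constructor <;> linarith
  have hdisj : Disjoint A B := by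
    rw [Set.disjoint_left]
    rintro p ⟨_, h1⟩ ⟨_, h2⟩
    exact absurd h1 (not_le.mpr h2)
  -- inner integral computation
  have hinner : ∀ x : ℝ, (∫ y in Set.Iic x, biNormalPdf r (x, y))
      = stdNormalPdf x * stdNormalCdf (Real.sqrt ((1 - r) / (1 + r)) * x) := by
    intro x
    calc (∫ y in Set.Iic x, biNormalPdf r (x, y))
        = ∫ y in Set.Iic x, stdNormalPdf x * ((Real.sqrt (1 - r ^ 2))⁻¹ *
            stdNormalPdf ((y - r * x) / Real.sqrt (1 - r ^ 2))) :=
          integral_congr_ae (.of_forall fun y => aux_factor_lemma r hr hr' x y)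
      _ = stdNormalPdf x * ∫ y in Set.Iic x, (Real.sqrt (1 - r ^ 2))⁻¹ *
            stdNormalPdf ((y - r * x) / Real.sqrt (1 - r ^ 2)) := integral_const_mul _ _
      _ = stdNormalPdf x * stdNormalCdf ((x - r * x) / Real.sqrt (1 - r ^ 2)) := by
          rw [aux_sub_lemma hσ (r * x) x]
      _ = stdNormalPdf x * stdNormalCdf (Real.sqrt ((1 - r) / (1 + r)) * x) := by
          rw [aux_beta_lemma r hr hr' x]
  have hIio : ∀ x : ℝ, (∫ y in Set.Iio x, biNormalPdf r (x, y))
      = ∫ y in Set.Iic x, biNormalPdf r (x, y) :=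
    fun x => setIntegral_congr_set Iio_ae_eq_Iic
  calc (∫ p in {p : ℝ × ℝ | max p.1 p.2 ≤ z}, biNormalPdf r p)
      = (∫ p in A, biNormalPdf r p) + ∫ p in B, biNormalPdf r p := by
        rw [hunion]
        exact setIntegral_union hdisj hB hf.integrableOn hf.integrableOn
    _ = (∫ x in Set.Iic z, ∫ y in Set.Iic x, biNormalPdf r (x, y))
        + ∫ x in Set.Iic z, ∫ y in Set.Iio x, biNormalPdf r (x, y) := by
        rw [aux_region_lemma _ hf z, aux_swap_lemma r z, aux_region_lemma' _ hf z]
    _ = (∫ x in Set.Iic z,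
          stdNormalPdf x * stdNormalCdf (Real.sqrt ((1 - r) / (1 + r)) * x))
        + ∫ x in Set.Iic z,
          stdNormalPdf x * stdNormalCdf (Real.sqrt ((1 - r) / (1 + r)) * x) := by
        congr 1
        · exact integral_congr_ae (.of_forall fun x => hinner x)
        · exact integral_congr_ae (.of_forall fun x => (hIio x).trans (hinner x))
    _ = ∫ t in Set.Iic z,
          2 * stdNormalPdf t * stdNormalCdf (Real.sqrt ((1 - r) / (1 + r)) * t) := by
        rw [← two_mul]
        rw [show (fun t => 2 * stdNormalPdf t * stdNormalCdf (Real.sqrt ((1 - r) / (1 + r)) * t))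
          = fun t => 2 * (stdNormalPdf t * stdNormalCdf (Real.sqrt ((1 - r) / (1 + r)) * t)) by
            funext t; ring]
        rw [integral_const_mul]
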